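/- Let m, d be positive integers, let (θ_{ij})_{1 ≤ i ≤ m, 1 ≤ j ≤ d} be i.i.d. standard Gaussian random variables, and let λ₁, …, λ_d ≥ 0 with Σ_j λ_j > 0. Then for any 0 < t < 1, Pr[ (1/m)·Σ_{i=1}^m Σ_{j=1}^d λ_j θ_{ij}² > (1 + t)·Σ_{j=1}^d λ_j ] ≤ exp(−m t²/24). -/

import Mathlib

open Real MeasureTheory ProbabilityTheory
open scoped NNReal ENNReal

/-- The Euclidean (ℓ₂) norm of a vector in `ℝ^n`. -/
noncomputable def l2 {n : ℕ} (v : Fin n → ℝ) : ℝ := Real.sqrt (∑ i, v i ^ 2)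

/-- The ℓ₁ norm of a vector in `ℝ^n`. -/
def l1 {n : ℕ} (v : Fin n → ℝ) : ℝ := ∑ i, |v i|

/-- A vector is `k`-sparse if it has at most `k` nonzero entries. -/
def Sparse {n : ℕ} (k : ℕ) (v : Fin n → ℝ) : Prop :=
  (Finset.univ.filter fun i => v i ≠ 0).card ≤ k

/-- `(k,δ)`-restricted isometry property. -/
def RIP {m d : ℕ} (k : ℕ) (δ : ℝ) (A : Matrix (Fin m) (Fin d) ℝ) : Prop :=
  ∀ x : Fin d → ℝ, Sparse k x →
    (1 - δ) * l2 x ^ 2 ≤ l2 (A.mulVec x) ^ 2 ∧ l2 (A.mulVec x) ^ 2 ≤ (1 + δ) * l2 x ^ 2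

/-- `z` is a best `k`-sparse approximation `y_{(1:k)}` of `y`: it keeps the `k`
largest-magnitude coordinates of `y` (all coordinates if `k ≥ d`) and zeros the rest. -/
def IsBestApprox {d : ℕ} (k : ℕ) (y z : Fin d → ℝ) : Prop :=
  ∃ S : Finset (Fin d), S.card = min k d ∧
    (∀ i ∈ S, ∀ j ∉ S, |y j| ≤ |y i|) ∧
    ∀ i, z i = if i ∈ S then y i else 0

lemma pdf_mul_exp (c : ℝ) (x : ℝ) :
    gaussianPDFReal 0 1 x * rexp (c * x ^ 2) = (√(2 * π))⁻¹ * rexp (-(1/2 - c) * x ^ 2) := by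
  rw [gaussianPDFReal]
  push_cast
  rw [mul_assoc, ← Real.exp_add]
  ring_nf

lemma chi_integrable {c : ℝ} (hc : c < 1/2) :
    Integrable (fun x => rexp (c * x ^ 2)) (gaussianReal 0 1) := by
  rw [gaussianReal_of_var_ne_zero 0 one_ne_zero]
  have h : (gaussianPDF 0 1) = fun x => ((Real.toNNReal (gaussianPDFReal 0 1 x) : ℝ≥0) : ℝ≥0∞) := rfl
  rw [h]
  apply (integrable_withDensity_iff_integrable_smul
    ((measurable_gaussianPDFReal 0 1).real_toNNReal)).mpr
  have : (fun x => (Real.toNNReal (gaussianPDFReal 0 1 x)) • rexp (c * x ^ 2))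
      = fun x => (√(2 * π))⁻¹ * rexp (-(1/2 - c) * x ^ 2) := by
    ext x
    rw [NNReal.smul_def, smul_eq_mul, Real.coe_toNNReal _ (gaussianPDFReal_nonneg 0 1 x),
      pdf_mul_exp]
  rw [this]
  exact (integrable_exp_neg_mul_sq (by linarith)).const_mul _

lemma chi_mgf {c : ℝ} (hc : c < 1/2) :
    ∫ x, rexp (c * x ^ 2) ∂(gaussianReal 0 1) = (√(1 - 2*c))⁻¹ := by
  have hb : (0:ℝ) < 1/2 - c := by linarith
  have key : ∫ x, rexp (c * x ^ 2) ∂(gaussianReal 0 1)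
      = ∫ x, gaussianPDFReal 0 1 x * rexp (c * x ^ 2) := by
    rw [gaussianReal_of_var_ne_zero 0 one_ne_zero]
    have h : (gaussianPDF 0 1) = fun x => ((Real.toNNReal (gaussianPDFReal 0 1 x) : ℝ≥0) : ℝ≥0∞) := rfl
    rw [h, integral_withDensity_eq_integral_smul ((measurable_gaussianPDFReal 0 1).real_toNNReal)]
    congr 1
    ext x
    rw [NNReal.smul_def, smul_eq_mul, Real.coe_toNNReal _ (gaussianPDFReal_nonneg 0 1 x)]
  rw [key]
  simp_rw [pdf_mul_exp c]
  rw [integral_const_mul, integral_gaussian]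
  rw [← Real.sqrt_inv, ← Real.sqrt_mul (by positivity)]
  rw [← Real.sqrt_inv]
  congr 1
  have hπ := Real.pi_pos
  have h1 : (1 : ℝ) - c * 2 ≠ 0 := by linarith
  have h2 : (1:ℝ)/2 - c ≠ 0 := by linarith
  rw [div_eq_mul_inv, mul_inv, ← mul_assoc,
    mul_assoc (2:ℝ)⁻¹ π⁻¹ π, inv_mul_cancel₀ hπ.ne', mul_one, ← mul_inv]
  congr 1
  ring

lemma log_one_add_le {t : ℝ} (ht0 : 0 < t) (ht1 : t < 1) :
    Real.log (1 + t) ≤ t - t^2/12 := by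
  rw [Real.log_le_iff_le_exp (by linarith)]
  have hx : (0:ℝ) ≤ t - t^2/12 := by nlinarith
  have := Real.quadratic_le_exp_of_nonneg hx
  nlinarith [this]

/-- Chernoff bound used in the proof of Theorem 4. -/
theorem stmt_7 {m d : ℕ} (hm : 0 < m) (hd : 0 < d)
    {Ω : Type*} [MeasureSpace Ω] [IsProbabilityMeasure (ℙ : Measure Ω)]
    (θ : Fin m × Fin d → Ω → ℝ)
    (hθmeas : ∀ ij, Measurable (θ ij))
    (hθindep : iIndepFun θ ℙ)
    (hθlaw : ∀ ij, Measure.map (θ ij) ℙ = gaussianReal 0 1)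
    (lam : Fin d → ℝ) (hlam : ∀ j, 0 ≤ lam j) (hlampos : 0 < ∑ j, lam j)
    (t : ℝ) (ht0 : 0 < t) (ht1 : t < 1) :
    (ℙ {ω | (1 + t) * ∑ j, lam j <
        (1 / (m : ℝ)) * ∑ i : Fin m, ∑ j : Fin d, lam j * (θ (i, j) ω) ^ 2}).toReal ≤
      Real.exp (-((m : ℝ) * t ^ 2) / 24) := by
  classical
  set Λ : ℝ := ∑ j, lam j with hΛ
  set a : Fin d → ℝ := fun j => lam j / Λ with ha
  have ha0 : ∀ j, 0 ≤ a j := fun j => div_nonneg (hlam j) hlampos.le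
  have ha1 : ∀ j, a j ≤ 1 := by
    intro j
    rw [ha, div_le_one hlampos]
    exact Finset.single_le_sum (fun j _ => hlam j) (Finset.mem_univ j)
  have hasum : ∑ j, a j = 1 := by
    rw [ha, ← Finset.sum_div, div_self hlampos.ne']
  set s : ℝ := t / (2 * (1 + t)) with hsdef
  have h1t : (0:ℝ) < 1 + t := by linarith
  have hs0 : 0 < s := by positivity
  have hs2 : s < 1/2 := by
    rw [hsdef, div_lt_iff₀ (by positivity)]
    linarith
  have h1_2s : 1 - 2*s = (1+t)⁻¹ := by
    rw [hsdef, mul_div_assoc', mul_div_mul_left _ _ (two_ne_zero), inv_eq_one_div,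
      eq_div_iff h1t.ne', sub_mul, div_mul_cancel₀ _ h1t.ne', one_mul]
    ring
  set X : Fin m × Fin d → Ω → ℝ := fun p ω => a p.2 * θ p ω ^ 2 with hX
  have hXmeas : ∀ p, Measurable (X p) := fun p => ((hθmeas p).pow_const 2).const_mul _
  have hXindep : iIndepFun X ℙ := by
    exact hθindep.comp (fun p x => a p.2 * x ^ 2)
      (fun p => (measurable_id.pow_const 2).const_mul _)
  have hsa : ∀ j : Fin d, s * a j < 1/2 := fun j =>
    lt_of_le_of_lt (by nlinarith [ha0 j, ha1 j]) hs2
  have hexpeq : ∀ p : Fin m × Fin d,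
      (fun ω => rexp (s * X p ω)) = (fun x => rexp (s * a p.2 * x ^ 2)) ∘ θ p := by
    intro p
    ext ω
    simp only [Function.comp_apply, hX]
    ring_nf
  -- per-variable integrability
  have hXint : ∀ p, Integrable (fun ω => rexp (s * X p ω)) ℙ := by
    intro p
    have hg : Measurable fun x : ℝ => rexp (s * a p.2 * x ^ 2) := by fun_prop
    have hint : Integrable (fun x : ℝ => rexp (s * a p.2 * x ^ 2)) (Measure.map (θ p) ℙ) := by
      rw [hθlaw p]; exact chi_integrable (hsa p.2)
    rw [hexpeq p]
    exact (integrable_map_measure hg.aestronglyMeasurable (hθmeas p).aemeasurable).mp hint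
  -- per-variable mgf
  have hmgf : ∀ p : Fin m × Fin d, mgf (X p) ℙ s = (√(1 - 2*(s * a p.2)))⁻¹ := by
    intro p
    rw [mgf]
    calc ∫ ω, rexp (s * X p ω) ∂ℙ
        = ∫ ω, ((fun x => rexp (s * a p.2 * x ^ 2)) ∘ θ p) ω ∂ℙ := by rw [← hexpeq p]
      _ = ∫ x, rexp (s * a p.2 * x ^ 2) ∂(Measure.map (θ p) ℙ) := by
          have hg : Measurable fun x : ℝ => rexp (s * a p.2 * x ^ 2) := by fun_prop
          rw [integral_map (hθmeas p).aemeasurable hg.aestronglyMeasurable]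
          rfl
      _ = (√(1 - 2*(s * a p.2)))⁻¹ := by rw [hθlaw p]; exact chi_mgf (hsa p.2)
  -- event inclusion
  have hsub : {ω | (1 + t) * Λ <
        (1 / (m : ℝ)) * ∑ i : Fin m, ∑ j : Fin d, lam j * (θ (i, j) ω) ^ 2}
      ⊆ {ω | (1 + t) * m ≤ (∑ p : Fin m × Fin d, X p) ω} := by
    intro ω hω
    simp only [Set.mem_setOf_eq] at hω ⊢
    have hmpos : (0:ℝ) < m := by exact_mod_cast hm
    have hT : (1 + t) * Λ * m < ∑ i : Fin m, ∑ j : Fin d, lam j * (θ (i, j) ω) ^ 2 := by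
      rw [one_div, inv_mul_eq_div, lt_div_iff₀ hmpos] at hω
      linarith
    have hSval : (∑ p : Fin m × Fin d, X p) ω
        = (∑ i : Fin m, ∑ j : Fin d, lam j * (θ (i, j) ω) ^ 2) / Λ := by
      rw [Finset.sum_apply, Fintype.sum_prod_type, Finset.sum_div]
      congr 1; ext i
      rw [Finset.sum_div]
      congr 1; ext j
      simp only [hX, ha]
      ring
    rw [hSval, le_div_iff₀ hlampos]
    nlinarith [hT]
  -- Chernoff
  have hint : Integrable (fun ω => rexp (s * (∑ p : Fin m × Fin d, X p) ω)) ℙ :=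
    hXindep.integrable_exp_mul_sum hXmeas (fun p _ => hXint p)
  have hchern := measure_ge_le_exp_mul_mgf (μ := ℙ) (X := ∑ p : Fin m × Fin d, X p)
    ((1 + t) * m) hs0.le hint
  have hmono : (ℙ {ω | (1 + t) * Λ <
        (1 / (m : ℝ)) * ∑ i : Fin m, ∑ j : Fin d, lam j * (θ (i, j) ω) ^ 2}).toReal
      ≤ (ℙ {ω | (1 + t) * m ≤ (∑ p : Fin m × Fin d, X p) ω}).toReal :=
    ENNReal.toReal_mono (measure_ne_top _ _) (measure_mono hsub)
  refine hmono.trans (hchern.trans ?_)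
  -- bound the mgf product
  rw [hXindep.mgf_sum hXmeas]
  have hfac : ∀ p : Fin m × Fin d,
      mgf (X p) ℙ s ≤ rexp (a p.2 / 2 * Real.log (1 + t)) := by
    intro p
    rw [hmgf p]
    set b := a p.2 with hb
    have hb0 := ha0 p.2
    have hb1 := ha1 p.2
    have hgm : ((1+t)⁻¹) ^ b ≤ 1 - 2 * (s * b) := by
      have := Real.geom_mean_le_arith_mean2_weighted (w₁ := 1 - b) (w₂ := b)
        (p₁ := 1) (p₂ := (1+t)⁻¹) (by linarith) hb0 zero_le_one (by positivity) (by ring)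
      rw [Real.one_rpow, one_mul] at this
      refine this.trans (le_of_eq ?_)
      have h2s : 2 * s = 1 - (1+t)⁻¹ := by rw [← h1_2s]; ring
      nlinarith [h2s]
    have hrw : ((1+t)⁻¹ : ℝ) ^ (b : ℝ) = rexp (-(b * Real.log (1 + t))) := by
      rw [Real.rpow_def_of_pos (by positivity), Real.log_inv]
      congr 1
      ring
    have hsqrt : rexp (-(b / 2 * Real.log (1 + t))) ≤ √(1 - 2 * (s * b)) := by
      rw [Real.le_sqrt (Real.exp_nonneg _) (by nlinarith [hgm, Real.rpow_nonneg (by positivity : (0:ℝ) ≤ (1+t)⁻¹) b])]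
      rw [sq, ← Real.exp_add]
      calc rexp (-(b / 2 * Real.log (1 + t)) + -(b / 2 * Real.log (1 + t)))
          = rexp (-(b * Real.log (1+t))) := by congr 1; ring
        _ ≤ 1 - 2 * (s * b) := by rw [← hrw]; exact hgm
    calc (√(1 - 2 * (s * b)))⁻¹ ≤ (rexp (-(b / 2 * Real.log (1 + t))))⁻¹ := by
          apply inv_anti₀ (Real.exp_pos _) hsqrt
      _ = rexp (b / 2 * Real.log (1 + t)) := by rw [← Real.exp_neg, neg_neg]
  calc rexp (-s * ((1 + t) * m)) * ∏ p : Fin m × Fin d, mgf (X p) ℙ s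
      ≤ rexp (-s * ((1 + t) * m)) * ∏ p : Fin m × Fin d, rexp (a p.2 / 2 * Real.log (1 + t)) := by
        apply mul_le_mul_of_nonneg_left _ (Real.exp_nonneg _)
        apply Finset.prod_le_prod (fun p _ => ?_) (fun p _ => hfac p)
        rw [hmgf p]
        positivity
    _ = rexp (-s * ((1 + t) * m) + (m : ℝ) / 2 * Real.log (1 + t)) := by
        have hsum2 : ∑ p : Fin m × Fin d, a p.2 / 2 * Real.log (1 + t)
            = (m : ℝ) / 2 * Real.log (1 + t) := by
          calc ∑ p : Fin m × Fin d, a p.2 / 2 * Real.log (1 + t)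
              = ∑ _i : Fin m, ∑ j : Fin d, a j / 2 * Real.log (1 + t) := by
                rw [Fintype.sum_prod_type]
            _ = ∑ _i : Fin m, 1 / 2 * Real.log (1 + t) :=
                Finset.sum_congr rfl (fun i _ => by
                  rw [← Finset.sum_mul, ← Finset.sum_div, hasum])
            _ = (m : ℝ) * (1 / 2 * Real.log (1 + t)) := by
                rw [Finset.sum_const, Finset.card_univ, Fintype.card_fin, nsmul_eq_mul]
            _ = (m : ℝ) / 2 * Real.log (1 + t) := by ring
        rw [← Real.exp_sum, hsum2, ← Real.exp_add]
    _ ≤ rexp (-((m : ℝ) * t ^ 2) / 24) := by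
        apply Real.exp_le_exp.mpr
        have hst : s * (1 + t) = t / 2 := by
          rw [hsdef]; field_simp
        have hlog := log_one_add_le ht0 ht1
        have hm1 : (1:ℝ) ≤ m := by exact_mod_cast hm
        nlinarith [hst, hlog, Real.log_nonneg (by linarith : (1:ℝ) ≤ 1 + t)]
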